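/- For n ∈ ℕ, let M(n) denote the set of pairs (c, i) where c = (n₁, …, n_m) is a composition of n into positive integer parts (the empty composition when n = 0) and 1 ≤ i ≤ m is a marked index. Then the map that sends a pair (c, i₀) with c a composition of n of length m and 1 ≤ i₀ ≤ m to the marked composition of n+1 obtained by incrementing the i₀-th part by 1 and marking it, and the map that sends a pair (c, i₀) with 1 ≤ i₀ ≤ m+1 to the marked composition of n+1 obtained by inserting a new part equal to 1 at position i₀ and marking it, together define a bijection from the disjoint union { (c, i₀) : c composition of n of length m, 1 ≤ i₀ ≤ m } ⊔ { (c, i₀) : c composition of n of length m, 1 ≤ i₀ ≤ m+1 } onto M(n+1). -/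

import Mathlib

/-- A composition of `n`: a finite sequence of positive integers summing to `n`
(the empty composition when `n = 0`). -/
structure CompS (n : ℕ) where
  m : ℕ
  d : Fin m → ℕ
  pos : ∀ i, 0 < d i
  sum_eq : ∑ i, d i = n

/-- A marked composition of `n`: a composition together with a marked index. -/
structure MarkedComp (n : ℕ) where
  m : ℕ
  d : Fin m → ℕ
  pos : ∀ i, 0 < d i
  sum_eq : ∑ i, d i = n
  mark : Fin m

/-- Increment the `i₀`-th part of a composition of `n` by `1` and mark it, producing a
marked composition of `n + 1`. -/
def incrMark (n : ℕ) (x : Σ c : CompS n, Fin c.m) : MarkedComp (n + 1) where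
  m := x.1.m
  d := Function.update x.1.d x.2 (x.1.d x.2 + 1)
  pos := by
    intro j
    rcases eq_or_ne j x.2 with h | h
    · subst h
      simp only [Function.update_self]
      omega
    · rw [Function.update_of_ne h]
      exact x.1.pos j
  sum_eq := by
    have h1 : ∑ i, Function.update x.1.d x.2 (x.1.d x.2 + 1) i
        = x.1.d x.2 + 1 + ∑ i ∈ Finset.univ \ {x.2}, x.1.d i :=
      Finset.sum_update_of_mem (Finset.mem_univ _) x.1.d (x.1.d x.2 + 1)
    have h2 : (Finset.univ \ {x.2} : Finset (Fin x.1.m)) = Finset.univ.erase x.2 :=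
      Finset.sdiff_singleton_eq_erase _ _
    have h3 : x.1.d x.2 + ∑ i ∈ Finset.univ.erase x.2, x.1.d i = ∑ i, x.1.d i :=
      Finset.add_sum_erase _ _ (Finset.mem_univ _)
    have h4 := x.1.sum_eq
    rw [h2] at h1
    omega
  mark := x.2

/-- Insert a new part equal to `1` at position `i₀` in a composition of `n` and mark it,
producing a marked composition of `n + 1`. -/
def insMark (n : ℕ) (x : Σ c : CompS n, Fin (c.m + 1)) : MarkedComp (n + 1) where
  m := x.1.m + 1
  d := Fin.insertNth x.2 1 x.1.d
  pos := by
    intro j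
    rcases eq_or_ne j x.2 with h | h
    · subst h
      simp
    · obtain ⟨i, rfl⟩ := Fin.exists_succAbove_eq h
      rw [Fin.insertNth_apply_succAbove]
      exact x.1.pos i
  sum_eq := by
    rw [Fin.sum_univ_succAbove _ x.2]
    simp only [Fin.insertNth_apply_same, Fin.insertNth_apply_succAbove]
    have := x.1.sum_eq
    omega
  mark := x.2

/-- The combined map from the disjoint union of `{(c, i₀) : c a composition of n, i₀ a part}`
and `{(c, i₀) : c a composition of n, i₀ a gap position}` to marked compositions of `n+1`. -/
def markedOfEither (n : ℕ) :
    ((Σ c : CompS n, Fin c.m) ⊕ (Σ c : CompS n, Fin (c.m + 1))) → MarkedComp (n + 1)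
  | .inl x => incrMark n x
  | .inr x => insMark n x

/-- Inverse map. -/
def invMarked (n : ℕ) :
    MarkedComp (n + 1) → ((Σ c : CompS n, Fin c.m) ⊕ (Σ c : CompS n, Fin (c.m + 1)))
  | ⟨0, _, _, _, mark⟩ => mark.elim0
  | ⟨k+1, d, pos, sum, mark⟩ =>
    if h : d mark = 1 then
      .inr ⟨⟨k, mark.removeNth d, fun i => pos _, by
        have := Fin.sum_univ_succAbove d mark
        unfold Fin.removeNth
        omega⟩, mark⟩
    else
      .inl ⟨⟨k+1, Function.update d mark (d mark - 1), by
        intro j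
        rcases eq_or_ne j mark with h' | h'
        · subst h'
          simp only [Function.update_self]
          have := pos j
          omega
        · rw [Function.update_of_ne h']
          exact pos j, by
        have h1 : ∑ i, Function.update d mark (d mark - 1) i
            = d mark - 1 + ∑ i ∈ Finset.univ \ {mark}, d i :=
          Finset.sum_update_of_mem (Finset.mem_univ _) d (d mark - 1)
        rw [Finset.sdiff_singleton_eq_erase] at h1
        have h3 : d mark + ∑ i ∈ Finset.univ.erase mark, d i = ∑ i, d i :=
          Finset.add_sum_erase _ _ (Finset.mem_univ _)
        have := pos mark
        omega⟩, mark⟩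

theorem invMarked_leftInverse (n : ℕ) :
    Function.LeftInverse (invMarked n) (markedOfEither n) := by
  rintro (⟨⟨m, d, pos, sum⟩, i⟩ | ⟨⟨m, d, pos, sum⟩, i⟩)
  · cases m with
    | zero => exact i.elim0
    | succ k =>
      simp only [markedOfEither, incrMark, invMarked]
      rw [dif_neg (by simp only [Function.update_self]; have := pos i; omega)]
      simp only [Sum.inl.injEq]
      congr 1
      congr 1
      rw [Function.update_self, Function.update_idem, Nat.add_sub_cancel,
        Function.update_eq_self]
  · simp only [markedOfEither, insMark, invMarked]
    rw [dif_pos (by simp)]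
    simp only [Sum.inr.injEq]
    congr 1
    congr 1
    exact Fin.removeNth_insertNth (α := fun _ => ℕ) i 1 d

theorem invMarked_rightInverse (n : ℕ) :
    Function.RightInverse (invMarked n) (markedOfEither n) := by
  rintro ⟨m, d, pos, sum, mark⟩
  cases m with
  | zero => exact mark.elim0
  | succ k =>
    simp only [invMarked]
    split
    · next h =>
      simp only [markedOfEither, insMark]
      congr 1
      rw [Fin.insertNth_removeNth, Function.update_eq_self_iff]
      exact h.symm
    · next h =>
      simp only [markedOfEither, incrMark]
      congr 1
      have hp := pos mark
      rw [Function.update_self, Function.update_idem, Nat.sub_add_cancel hp,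
        Function.update_eq_self]

/-- The two maps (incrementing a marked part, or inserting a part equal to `1`) together
define a bijection onto the set of marked compositions of `n + 1`. -/
theorem markedOfEither_bijective (n : ℕ) : Function.Bijective (markedOfEither n) :=
  Function.bijective_iff_has_inverse.mpr
    ⟨invMarked n, invMarked_leftInverse n, invMarked_rightInverse n⟩
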